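/- Let K₁ and K₂ be isotropic subspaces of (E, B) and let R = {(q₁(e), q₂(e)) : e ∈ K₁^⊥ ∩ K₂^⊥} ⊆ (K₁^⊥/K₁) × (K₂^⊥/K₂). Then R equals its own orthogonal complement with respect to the nondegenerate symmetric bilinear form ((x₁, x₂), (y₁, y₂)) ↦ B̄₁(x₁, y₁) − B̄₂(x₂, y₂); in particular R is maximally isotropic (a linear Dirac structure) and dim R = dim E − dim K₁ − dim K₂. -/

import Mathlib

/-- The orthogonal complement `K^⊥` of a subspace `K` with respect to `B`. -/
noncomputable def orthB {E : Type*} [AddCommGroup E] [Module ℝ E]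
    (B : LinearMap.BilinForm ℝ E) (K : Submodule ℝ E) : Submodule ℝ E :=
  LinearMap.BilinForm.orthogonal B K
/-- An isotropic `K`, regarded as a submodule of `K^⊥`. -/
noncomputable def Ksub {E : Type*} [AddCommGroup E] [Module ℝ E]
    (B : LinearMap.BilinForm ℝ E) (K : Submodule ℝ E) : Submodule ℝ ↥(orthB B K) :=
  Submodule.comap (orthB B K).subtype K

/-- The reduced space `K^⊥/K`. -/
abbrev Red {E : Type*} [AddCommGroup E] [Module ℝ E]
    (B : LinearMap.BilinForm ℝ E) (K : Submodule ℝ E) :=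
  ↥(orthB B K) ⧸ Ksub B K

/-- The quotient map `q : K^⊥ → K^⊥/K`. -/
noncomputable def qmap {E : Type*} [AddCommGroup E] [Module ℝ E]
    (B : LinearMap.BilinForm ℝ E) (K : Submodule ℝ E) :
    ↥(orthB B K) →ₗ[ℝ] Red B K :=
  (Ksub B K).mkQ
/-- The map `L : K₁^⊥ ∩ K₂^⊥ → (K₁^⊥/K₁) × (K₂^⊥/K₂)`, `e ↦ (q₁(e), q₂(e))`. -/
noncomputable def Lmap {E : Type*} [AddCommGroup E] [Module ℝ E]
    (B : LinearMap.BilinForm ℝ E) (K₁ K₂ : Submodule ℝ E) :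
    ↥(orthB B K₁ ⊓ orthB B K₂) →ₗ[ℝ] Red B K₁ × Red B K₂ :=
  LinearMap.prod
    (qmap B K₁ ∘ₗ Submodule.inclusion inf_le_left)
    (qmap B K₂ ∘ₗ Submodule.inclusion inf_le_right)

section aux
variable {E : Type*} [AddCommGroup E] [Module ℝ E] [FiniteDimensional ℝ E]
    (B : LinearMap.BilinForm ℝ E)

-- nondegeneracy of reduced form
lemma aux_nd (hBsymm : ∀ e e', B e e' = B e' e) (hBnd : B.Nondegenerate)
    (K : Submodule ℝ E) (Bbar : LinearMap.BilinForm ℝ (Red B K))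
    (hBbar : ∀ e e' : ↥(orthB B K), Bbar (qmap B K e) (qmap B K e') = B (e : E) (e' : E)) :
    Bbar.Nondegenerate := by
  have hrefl : B.IsRefl := fun x y h => by rw [hBsymm]; exact h
  suffices hL : LinearMap.SeparatingLeft Bbar by
    have hsymm : ∀ x y, Bbar x y = Bbar y x := by
      intro x y
      obtain ⟨a, rfl⟩ := (Ksub B K).mkQ_surjective x
      obtain ⟨b, rfl⟩ := (Ksub B K).mkQ_surjective y
      rw [show (Ksub B K).mkQ = qmap B K from rfl, hBbar, hBbar, hBsymm]
    exact ⟨hL, fun y hy => hL y fun x => (hsymm y x).trans (hy x)⟩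
  intro x hx
  obtain ⟨e, rfl⟩ := (Ksub B K).mkQ_surjective x
  have he : (e : E) ∈ K := by
    have h2 : (e : E) ∈ LinearMap.BilinForm.orthogonal B (orthB B K) := by
      intro n hn
      have := hx ((Ksub B K).mkQ ⟨n, hn⟩)
      rw [show (Ksub B K).mkQ = qmap B K from rfl, hBbar] at this
      show (B n) (e : E) = 0
      rw [hBsymm]; exact this
    rwa [show LinearMap.BilinForm.orthogonal B (orthB B K)
        = LinearMap.BilinForm.orthogonal B (LinearMap.BilinForm.orthogonal B K) from rfl,
      B.orthogonal_orthogonal hBnd hrefl K] at h2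
  exact (Submodule.Quotient.mk_eq_zero (Ksub B K)).mpr he

end aux

lemma qmap_eq_zero {E : Type*} [AddCommGroup E] [Module ℝ E]
    (B : LinearMap.BilinForm ℝ E) (K : Submodule ℝ E) (e : ↥(orthB B K)) :
    qmap B K e = 0 ↔ (e : E) ∈ K := by
  rw [qmap, Submodule.mkQ_apply, Submodule.Quotient.mk_eq_zero]
  rfl


/-- The fibrewise T-duality relation `R = {(q₁(e), q₂(e)) : e ∈ K₁^⊥ ∩ K₂^⊥}` equals its own
orthogonal complement with respect to the difference of the reduced pairings; in particular it
is maximally isotropic, of dimension `dim E − dim K₁ − dim K₂`. -/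
theorem stmt11 (E : Type*) [AddCommGroup E] [Module ℝ E] [FiniteDimensional ℝ E]
    (B : LinearMap.BilinForm ℝ E)
    (hBsymm : ∀ e e', B e e' = B e' e)
    (hBnd : LinearMap.BilinForm.Nondegenerate B)
    (K₁ K₂ : Submodule ℝ E)
    (hK₁ : K₁ ≤ orthB B K₁) (hK₂ : K₂ ≤ orthB B K₂)
    (Bbar₁ : LinearMap.BilinForm ℝ (Red B K₁))
    (hBbar₁ : ∀ e e' : ↥(orthB B K₁),
      Bbar₁ (qmap B K₁ e) (qmap B K₁ e') = B (e : E) (e' : E))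
    (Bbar₂ : LinearMap.BilinForm ℝ (Red B K₂))
    (hBbar₂ : ∀ e e' : ↥(orthB B K₂),
      Bbar₂ (qmap B K₂ e) (qmap B K₂ e') = B (e : E) (e' : E)) :
    LinearMap.BilinForm.orthogonal
        (LinearMap.compl₁₂ Bbar₁ (LinearMap.fst ℝ (Red B K₁) (Red B K₂))
            (LinearMap.fst ℝ (Red B K₁) (Red B K₂))
          - LinearMap.compl₁₂ Bbar₂ (LinearMap.snd ℝ (Red B K₁) (Red B K₂))
            (LinearMap.snd ℝ (Red B K₁) (Red B K₂)))
        (LinearMap.range (Lmap B K₁ K₂))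
      = LinearMap.range (Lmap B K₁ K₂) ∧
    (Module.finrank ℝ ↥(LinearMap.range (Lmap B K₁ K₂)) : ℤ)
      = (Module.finrank ℝ E : ℤ) - (Module.finrank ℝ ↥K₁ : ℤ)
        - (Module.finrank ℝ ↥K₂ : ℤ) := by
  have hrefl : B.IsRefl := fun x y h => by rw [hBsymm]; exact h
  set Q : LinearMap.BilinForm ℝ (Red B K₁ × Red B K₂) :=
    LinearMap.compl₁₂ Bbar₁ (LinearMap.fst ℝ (Red B K₁) (Red B K₂))
        (LinearMap.fst ℝ (Red B K₁) (Red B K₂))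
      - LinearMap.compl₁₂ Bbar₂ (LinearMap.snd ℝ (Red B K₁) (Red B K₂))
        (LinearMap.snd ℝ (Red B K₁) (Red B K₂)) with hQdef
  have hQapp : ∀ x y : Red B K₁ × Red B K₂, Q x y = Bbar₁ x.1 y.1 - Bbar₂ x.2 y.2 :=
    fun x y => rfl
  set R := LinearMap.range (Lmap B K₁ K₂) with hRdef
  have hnd₁ := aux_nd B hBsymm hBnd K₁ Bbar₁ hBbar₁
  have hnd₂ := aux_nd B hBsymm hBnd K₂ Bbar₂ hBbar₂
  have hsymm₁ : ∀ x y, Bbar₁ x y = Bbar₁ y x := by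
    intro x y
    obtain ⟨a, rfl⟩ := (Ksub B K₁).mkQ_surjective x
    obtain ⟨b, rfl⟩ := (Ksub B K₁).mkQ_surjective y
    rw [show (Ksub B K₁).mkQ = qmap B K₁ from rfl, hBbar₁, hBbar₁, hBsymm]
  have hsymm₂ : ∀ x y, Bbar₂ x y = Bbar₂ y x := by
    intro x y
    obtain ⟨a, rfl⟩ := (Ksub B K₂).mkQ_surjective x
    obtain ⟨b, rfl⟩ := (Ksub B K₂).mkQ_surjective y
    rw [show (Ksub B K₂).mkQ = qmap B K₂ from rfl, hBbar₂, hBbar₂, hBsymm]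
  have hQrefl : Q.IsRefl := by
    intro x y h
    rw [hQapp] at h ⊢
    rw [hsymm₁ y.1, hsymm₂ y.2]
    exact h
  have hQnd : Q.Nondegenerate := by
    refine hQrefl.nondegenerate_iff_separatingLeft.mpr ?_
    intro x hx
    have h1 : x.1 = 0 := by
      apply hnd₁.1; intro y
      have := hx (y, 0)
      rw [hQapp] at this
      simpa using this
    have h2 : x.2 = 0 := by
      apply hnd₂.1; intro y
      have := hx (0, y)
      rw [hQapp] at this
      simpa using this
    exact Prod.ext h1 h2
  -- isotropy
  have hQL : ∀ e e' : ↥(orthB B K₁ ⊓ orthB B K₂),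
      Q (Lmap B K₁ K₂ e) (Lmap B K₁ K₂ e') = 0 := by
    intro e e'
    rw [hQapp]
    show Bbar₁ (qmap B K₁ (Submodule.inclusion inf_le_left e))
        (qmap B K₁ (Submodule.inclusion inf_le_left e'))
      - Bbar₂ (qmap B K₂ (Submodule.inclusion inf_le_right e))
        (qmap B K₂ (Submodule.inclusion inf_le_right e')) = 0
    rw [hBbar₁, hBbar₂]
    simp [Submodule.coe_inclusion]
  have hiso : R ≤ Q.orthogonal R := by
    rintro _ ⟨e, rfl⟩ _ ⟨e', rfl⟩
    exact hQL e' e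
  -- dimensions
  set n := Module.finrank ℝ E
  set k₁ := Module.finrank ℝ K₁
  set k₂ := Module.finrank ℝ K₂
  have hk₁n : k₁ ≤ n := Submodule.finrank_le K₁
  have hk₂n : k₂ ≤ n := Submodule.finrank_le K₂
  have hd_orth₁ : Module.finrank ℝ (orthB B K₁) = n - k₁ :=
    B.finrank_orthogonal hBnd K₁
  have hd_orth₂ : Module.finrank ℝ (orthB B K₂) = n - k₂ :=
    B.finrank_orthogonal hBnd K₂
  have hKsub₁ : Module.finrank ℝ (Ksub B K₁) = k₁ :=
    (Submodule.comapSubtypeEquivOfLe hK₁).finrank_eq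
  have hKsub₂ : Module.finrank ℝ (Ksub B K₂) = k₂ :=
    (Submodule.comapSubtypeEquivOfLe hK₂).finrank_eq
  have hRed₁ : Module.finrank ℝ (Red B K₁) + k₁ = n - k₁ := by
    rw [← hd_orth₁, ← hKsub₁]
    exact Submodule.finrank_quotient_add_finrank (Ksub B K₁)
  have hRed₂ : Module.finrank ℝ (Red B K₂) + k₂ = n - k₂ := by
    rw [← hd_orth₂, ← hKsub₂]
    exact Submodule.finrank_quotient_add_finrank (Ksub B K₂)
  have hW : orthB B K₁ ⊓ orthB B K₂ = B.orthogonal (K₁ ⊔ K₂) := by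
    apply le_antisymm
    · rintro x ⟨hx1, hx2⟩ m hm
      obtain ⟨a, ha, b, hb, rfl⟩ := Submodule.mem_sup.mp hm
      show B (a + b) x = 0
      rw [map_add, LinearMap.add_apply, hx1 a ha, hx2 b hb, add_zero]
    · exact le_inf (B.orthogonal_le le_sup_left) (B.orthogonal_le le_sup_right)
  have hsupn : Module.finrank ℝ (K₁ ⊔ K₂ : Submodule ℝ E) ≤ n :=
    Submodule.finrank_le _
  have hdW : Module.finrank ℝ (orthB B K₁ ⊓ orthB B K₂ : Submodule ℝ E)
      = n - Module.finrank ℝ (K₁ ⊔ K₂ : Submodule ℝ E) := by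
    rw [hW]; exact B.finrank_orthogonal hBnd _
  have hK12le : K₁ ⊓ K₂ ≤ orthB B K₁ ⊓ orthB B K₂ :=
    inf_le_inf hK₁ hK₂
  have hker : LinearMap.ker (Lmap B K₁ K₂)
      = Submodule.comap (orthB B K₁ ⊓ orthB B K₂).subtype (K₁ ⊓ K₂) := by
    ext e
    constructor
    · intro h
      have h0 : Lmap B K₁ K₂ e = 0 := h
      have h1 : qmap B K₁ (Submodule.inclusion inf_le_left e) = 0 := congrArg Prod.fst h0
      have h2 : qmap B K₂ (Submodule.inclusion inf_le_right e) = 0 := congrArg Prod.snd h0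
      exact ⟨(qmap_eq_zero B K₁ _).mp h1, (qmap_eq_zero B K₂ _).mp h2⟩
    · intro h
      obtain ⟨h1, h2⟩ := h
      show Lmap B K₁ K₂ e = 0
      exact Prod.ext ((qmap_eq_zero B K₁ _).mpr h1) ((qmap_eq_zero B K₂ _).mpr h2)
  have hkerrank : Module.finrank ℝ (LinearMap.ker (Lmap B K₁ K₂))
      = Module.finrank ℝ (K₁ ⊓ K₂ : Submodule ℝ E) := by
    rw [hker]
    exact (Submodule.comapSubtypeEquivOfLe hK12le).finrank_eq
  have hrange : Module.finrank ℝ R + Module.finrank ℝ (K₁ ⊓ K₂ : Submodule ℝ E)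
      = Module.finrank ℝ (orthB B K₁ ⊓ orthB B K₂ : Submodule ℝ E) := by
    rw [← hkerrank]
    exact LinearMap.finrank_range_add_finrank_ker (Lmap B K₁ K₂)
  have hsup : Module.finrank ℝ (K₁ ⊔ K₂ : Submodule ℝ E)
      + Module.finrank ℝ (K₁ ⊓ K₂ : Submodule ℝ E) = k₁ + k₂ :=
    Submodule.finrank_sup_add_finrank_inf_eq K₁ K₂
  have hdimR : Module.finrank ℝ R = n - k₁ - k₂ ∧ k₁ + k₂ ≤ n := by
    constructor <;> omega
  -- maximal isotropy
  have hamb : Module.finrank ℝ (Red B K₁ × Red B K₂)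
      = Module.finrank ℝ (Red B K₁) + Module.finrank ℝ (Red B K₂) :=
    Module.finrank_prod
  have horth : Module.finrank ℝ (Q.orthogonal R)
      = Module.finrank ℝ (Red B K₁ × Red B K₂) - Module.finrank ℝ R :=
    Q.finrank_orthogonal hQnd R
  have hle : Module.finrank ℝ (Q.orthogonal R) ≤ Module.finrank ℝ R := by omega
  refine ⟨(Submodule.eq_of_le_of_finrank_le hiso hle).symm, ?_⟩
  have := hdimR.1
  have := hdimR.2
  omega
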